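/- Let X, Y be smooth real Banach spaces and T : X → Y a bounded linear operator with ‖T‖ = 1 and rank T > 1. If x is a unit vector with ‖Tx‖ = 1, then (x, Tx) is a weak CPP: there exist a unit vector z with x ⊥_B z, a unit vector w with Tx ⊥_B w, and constants r > 0, μ > 0 such that ax + bz ∈ B(x, r) ∩ S_X implies ‖a·Tx + bμw‖ ≤ 1. -/

import Mathlib

open Metric

/-- Birkhoff-James orthogonality: `x ⊥_B y` iff `‖x + t y‖ ≥ ‖x‖` for all real `t`. -/
def BJOrth {X : Type*} [NormedAddCommGroup X] [NormedSpace ℝ X] (x y : X) : Prop :=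
  ∀ t : ℝ, ‖x‖ ≤ ‖x + t • y‖

/-- `(x, y)` is a compatible point pair with constant `(r, μ)`. -/
def IsCPPConst {X Y : Type*} [NormedAddCommGroup X] [NormedSpace ℝ X]
    [NormedAddCommGroup Y] [NormedSpace ℝ Y] (x : X) (y : Y) (r μ : ℝ) : Prop :=
  ∀ z : X, ‖z‖ = 1 → BJOrth x z → ∀ w : Y, ‖w‖ = 1 → BJOrth y w →
    ∀ a b : ℝ, ‖a • x + b • z - x‖ ≤ r → ‖a • x + b • z‖ = 1 →
      ‖a • y + (b * μ) • w‖ ≤ 1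

/-- `(x, y)` is a compatible point pair (CPP). -/
def IsCPP {X Y : Type*} [NormedAddCommGroup X] [NormedSpace ℝ X]
    [NormedAddCommGroup Y] [NormedSpace ℝ Y] (x : X) (y : Y) : Prop :=
  ∃ r > 0, ∃ μ > 0, IsCPPConst x y r μ

/-- `(x, y)` is a weakly compatible point pair (weak CPP). -/
def IsWeakCPP {X Y : Type*} [NormedAddCommGroup X] [NormedSpace ℝ X]
    [NormedAddCommGroup Y] [NormedSpace ℝ Y] (x : X) (y : Y) : Prop :=
  ∃ z : X, ‖z‖ = 1 ∧ BJOrth x z ∧ ∃ w : Y, ‖w‖ = 1 ∧ BJOrth y w ∧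
    ∃ r > 0, ∃ μ > 0, ∀ a b : ℝ, ‖a • x + b • z - x‖ ≤ r → ‖a • x + b • z‖ = 1 →
      ‖a • y + (b * μ) • w‖ ≤ 1

/-- A normed space is smooth if every unit vector has a unique supporting functional. -/
def SmoothSp (X : Type*) [NormedAddCommGroup X] [NormedSpace ℝ X] : Prop :=
  ∀ x : X, ‖x‖ = 1 → ∃! f : X →L[ℝ] ℝ, ‖f‖ = 1 ∧ f x = 1

theorem stmt5 {X Y : Type*} [NormedAddCommGroup X] [NormedSpace ℝ X] [CompleteSpace X]
    [NormedAddCommGroup Y] [NormedSpace ℝ Y] [CompleteSpace Y]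
    (hX : SmoothSp X) (hY : SmoothSp Y) (T : X →L[ℝ] Y) (hT : ‖T‖ = 1)
    (hrank : 1 < Module.rank ℝ (LinearMap.range (T : X →ₗ[ℝ] Y)))
    (x : X) (hx : ‖x‖ = 1) (hTx : ‖T x‖ = 1) :
    IsWeakCPP x (T x) := by
  -- supporting functional of x
  have hx0 : x ≠ 0 := by intro h; rw [h, norm_zero] at hx; norm_num at hx
  obtain ⟨f, hf1, hfx⟩ := exists_dual_vector ℝ x (norm_ne_zero_iff.mpr hx0)
  rw [hx] at hfx
  -- supporting functional of Tx
  have hTx0 : T x ≠ 0 := by intro h; rw [h, norm_zero] at hTx; norm_num at hTx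
  obtain ⟨g, hg1, hgTx⟩ := exists_dual_vector ℝ (T x) (norm_ne_zero_iff.mpr hTx0)
  rw [hTx] at hgTx
  -- g ∘ T is also a supporting functional of x
  have hgT1 : ‖g.comp T‖ = 1 := by
    apply le_antisymm
    · calc ‖g.comp T‖ ≤ ‖g‖ * ‖T‖ := ContinuousLinearMap.opNorm_comp_le g T
        _ = 1 := by rw [hg1, hT]; ring
    · have := (g.comp T).le_opNorm x
      rw [hx, mul_one] at this
      calc (1:ℝ) = ‖(g.comp T) x‖ := by simp [hgTx]
        _ ≤ ‖g.comp T‖ := this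
  have hfeq : f = g.comp T :=
    (hX x hx).unique ⟨hf1, by simpa using hfx⟩ ⟨hgT1, by simpa using hgTx⟩
  -- pick u with T u ∉ span {T x}
  have hsp : ¬ (LinearMap.range (T : X →ₗ[ℝ] Y) ≤ Submodule.span ℝ {T x}) := by
    intro hle
    have h1 : Module.rank ℝ (LinearMap.range (T : X →ₗ[ℝ] Y)) ≤
        Module.rank ℝ (Submodule.span ℝ ({T x} : Set Y)) := Submodule.rank_mono hle
    have h2 : Module.rank ℝ (Submodule.span ℝ ({T x} : Set Y)) ≤ 1 := by
      simpa using rank_span_le ({T x} : Set Y)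
    exact absurd (h1.trans h2) (not_le.mpr hrank)
  rw [SetLike.not_le_iff_exists] at hsp
  obtain ⟨y, hyr, hys⟩ := hsp
  obtain ⟨u, rfl⟩ := hyr
  -- define z
  set z' : X := u - f u • x with hz'
  have hTz' : T z' = T u - f u • T x := by simp [hz']
  have hTz'0 : T z' ≠ 0 := by
    intro h
    rw [hTz', sub_eq_zero] at h
    exact hys (h ▸ Submodule.smul_mem _ _ (Submodule.mem_span_singleton_self _))
  have hz'0 : z' ≠ 0 := fun h => hTz'0 (by rw [h, map_zero])
  set z : X := ‖z'‖⁻¹ • z' with hzdef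
  have hznorm : ‖z‖ = 1 := by
    rw [hzdef, norm_smul, norm_inv, norm_norm, inv_mul_cancel₀ (norm_ne_zero_iff.mpr hz'0)]
  have hfz' : f z' = 0 := by simp [hz', hfx]
  have hfz : f z = 0 := by rw [hzdef]; simp [hfz']
  have hxz : BJOrth x z := by
    intro t
    have : f (x + t • z) = 1 := by simp [hfx, hfz]
    calc ‖x‖ = 1 := hx
      _ = ‖f (x + t • z)‖ := by rw [this]; simp
      _ ≤ ‖f‖ * ‖x + t • z‖ := f.le_opNorm _
      _ = ‖x + t • z‖ := by rw [hf1, one_mul]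
  -- define w and μ
  have hgTz : g (T z) = 0 := by
    have : f z = (g.comp T) z := by rw [hfeq]
    simpa [this] using hfz
  have hTz0 : T z ≠ 0 := by
    rw [hzdef]
    simp only [map_smul]
    exact smul_ne_zero (inv_ne_zero (norm_ne_zero_iff.mpr hz'0)) hTz'0
  set μ : ℝ := ‖T z‖ with hμdef
  have hμpos : 0 < μ := norm_pos_iff.mpr hTz0
  set w : Y := ‖T z‖⁻¹ • T z with hwdef
  have hwnorm : ‖w‖ = 1 := by
    rw [hwdef, norm_smul, norm_inv, norm_norm, inv_mul_cancel₀ (norm_ne_zero_iff.mpr hTz0)]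
  have hgw : g w = 0 := by rw [hwdef]; simp [hgTz]
  have hTxw : BJOrth (T x) w := by
    intro t
    have : g (T x + t • w) = 1 := by simp [hgTx, hgw]
    calc ‖T x‖ = 1 := hTx
      _ = ‖g (T x + t • w)‖ := by rw [this]; simp
      _ ≤ ‖g‖ * ‖T x + t • w‖ := g.le_opNorm _
      _ = ‖T x + t • w‖ := by rw [hg1, one_mul]
  refine ⟨z, hznorm, hxz, w, hwnorm, hTxw, 1, one_pos, μ, hμpos, ?_⟩
  intro a b _ hab
  have key : a • T x + (b * μ) • w = T (a • x + b • z) := by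
    rw [hwdef, hμdef, smul_smul, mul_assoc,
      mul_inv_cancel₀ (norm_ne_zero_iff.mpr hTz0), mul_one]
    simp
  rw [key]
  calc ‖T (a • x + b • z)‖ ≤ ‖T‖ * ‖a • x + b • z‖ := T.le_opNorm _
    _ = 1 := by rw [hT, hab, mul_one]
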